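/- Let p > 2, p′ = p/(p−1), a > 0 and 0 ≤ b ≤ p − 1, and let h be the Legendre transform of f(s,t) = (a/p)(|s|^p + 2b|s|^{p/2}|t|^{p/2} + |t|^p). Then for all real s̄, t̄ the Euler identity h(s̄, t̄) = (1/p′) · ( ∂_{s̄}h(s̄,t̄) · s̄ + ∂_{t̄}h(s̄,t̄) · t̄ ) holds. -/

import Mathlib

open Set Filter Metric Real

section quad

lemma stmt8_qf_nonneg (A B C u1 u2 : ℝ) (hA : 0 < A) (hdet : 0 ≤ A*C - B^2) :
    0 ≤ A*u1^2 + 2*B*u1*u2 + C*u2^2 := by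
  nlinarith [sq_nonneg (A*u1+B*u2), mul_nonneg hdet (sq_nonneg u2)]

lemma stmt8_qf_pos (A B C u1 u2 : ℝ) (hA : 0 < A) (hdet : 0 < A*C - B^2)
    (hu : ¬(u1 = 0 ∧ u2 = 0)) :
    0 < A*u1^2 + 2*B*u1*u2 + C*u2^2 := by
  rcases eq_or_ne u2 0 with hu2 | hu2
  · have hu1 : u1 ≠ 0 := fun hu1 => hu ⟨hu1, hu2⟩
    have h1 : 0 < A*u1^2 := mul_pos hA (sq_pos_of_ne_zero hu1)
    rw [hu2]; ring_nf; nlinarith [h1]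
  · nlinarith [sq_nonneg (A*u1+B*u2), mul_pos hdet (sq_pos_of_ne_zero hu2)]

variable {p b : ℝ}

lemma stmt8_A_pos (hp : 2 < p) (hb0 : 0 ≤ b) {e g x y : ℝ}
    (he : 0 < e) (hg : 0 < g) (hx : 0 < x) (hy : 0 < y) :
    0 < p*(p-1)*e^2*x^2 + 2*b*(p/2)*((p/2)-1)*e*g*y^2 := by
  have h1 : 0 < p*(p-1)*e^2*x^2 :=
    mul_pos (mul_pos (mul_pos (by linarith) (by linarith)) (pow_pos he 2)) (pow_pos hx 2)
  have h2 : (0:ℝ) ≤ 2*b*(p/2)*((p/2)-1)*e*g*y^2 :=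
    mul_nonneg (mul_nonneg (mul_nonneg (mul_nonneg (mul_nonneg
      (by linarith : (0:ℝ) ≤ 2*b) (by linarith : (0:ℝ) ≤ p/2)) (by linarith)) he.le) hg.le)
      (sq_nonneg y)
  linarith

lemma stmt8_det_nonneg (hp : 2 < p) (hb0 : 0 ≤ b) (hb1 : b ≤ p - 1) {e g x y : ℝ}
    (he : 0 < e) (hg : 0 < g) (hx : 0 < x) (hy : 0 < y) :
    0 ≤ (p*(p-1)*e^2*x^2 + 2*b*(p/2)*((p/2)-1)*e*g*y^2)
        * (p*(p-1)*g^2*y^2 + 2*b*(p/2)*((p/2)-1)*e*x^2*g)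
      - (2*b*(p/2)^2*(e*x)*(g*y))^2 := by
  have hdet : (p*(p-1)*e^2*x^2 + 2*b*(p/2)*((p/2)-1)*e*g*y^2)
        * (p*(p-1)*g^2*y^2 + 2*b*(p/2)*((p/2)-1)*e*x^2*g)
      - (2*b*(p/2)^2*(e*x)*(g*y))^2
      = 2*b*(p/2)*((p/2)-1)*p*(p-1)*(e*g)*(e*x^2-g*y^2)^2
        + (e*g*x*y)^2*(p^2*(p-1)*((1+b)*((p-1)-b))) := by ring
  rw [hdet]
  have h1 : (0:ℝ) ≤ 2*b*(p/2)*((p/2)-1)*p*(p-1)*(e*g)*(e*x^2-g*y^2)^2 :=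
    mul_nonneg (mul_nonneg (mul_nonneg (mul_nonneg (mul_nonneg (mul_nonneg
      (by linarith : (0:ℝ) ≤ 2*b) (by linarith : (0:ℝ) ≤ p/2)) (by linarith)) (by linarith))
      (by linarith)) (mul_nonneg he.le hg.le)) (sq_nonneg _)
  have h2 : (0:ℝ) ≤ (e*g*x*y)^2*(p^2*(p-1)*((1+b)*((p-1)-b))) :=
    mul_nonneg (sq_nonneg _) (mul_nonneg (mul_nonneg (sq_nonneg p) (by linarith))
      (mul_nonneg (by linarith) (by linarith)))
  linarith

lemma stmt8_det_pos (hp : 2 < p) (hb0 : 0 ≤ b) (hb1 : b ≤ p - 1) {e g x y : ℝ}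
    (he : 0 < e) (hg : 0 < g) (hx : 0 < x) (hy : 0 < y) (hxy : e*x^2 ≠ g*y^2) :
    0 < (p*(p-1)*e^2*x^2 + 2*b*(p/2)*((p/2)-1)*e*g*y^2)
        * (p*(p-1)*g^2*y^2 + 2*b*(p/2)*((p/2)-1)*e*x^2*g)
      - (2*b*(p/2)^2*(e*x)*(g*y))^2 := by
  have hdet : (p*(p-1)*e^2*x^2 + 2*b*(p/2)*((p/2)-1)*e*g*y^2)
        * (p*(p-1)*g^2*y^2 + 2*b*(p/2)*((p/2)-1)*e*x^2*g)
      - (2*b*(p/2)^2*(e*x)*(g*y))^2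
      = 2*b*(p/2)*((p/2)-1)*p*(p-1)*(e*g)*(e*x^2-g*y^2)^2
        + (e*g*x*y)^2*(p^2*(p-1)*((1+b)*((p-1)-b))) := by ring
  rw [hdet]
  have hsq : 0 < (e*x^2-g*y^2)^2 := sq_pos_of_ne_zero (sub_ne_zero.2 hxy)
  rcases eq_or_lt_of_le hb0 with hb | hb
  · have h1 : 2*b*(p/2)*((p/2)-1)*p*(p-1)*(e*g)*(e*x^2-g*y^2)^2 = 0 := by
      rw [← hb]; ring
    have h2 : (0:ℝ) < (e*g*x*y)^2*(p^2*(p-1)*((1+b)*((p-1)-b))) := by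
      apply mul_pos (sq_pos_of_ne_zero (by positivity))
      apply mul_pos (mul_pos (sq_pos_of_ne_zero (by linarith)) (by linarith))
      apply mul_pos (by linarith) (by rw [← hb]; linarith)
    linarith
  · have h1 : (0:ℝ) < 2*b*(p/2)*((p/2)-1)*p*(p-1)*(e*g)*(e*x^2-g*y^2)^2 :=
      mul_pos (mul_pos (mul_pos (mul_pos (mul_pos (mul_pos
        (by linarith : (0:ℝ) < 2*b) (by linarith : (0:ℝ) < p/2)) (by linarith)) (by linarith))
        (by linarith)) (mul_pos he hg)) hsq
    have h2 : (0:ℝ) ≤ (e*g*x*y)^2*(p^2*(p-1)*((1+b)*((p-1)-b))) :=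
      mul_nonneg (sq_nonneg _) (mul_nonneg (mul_nonneg (sq_nonneg p) (by linarith))
        (mul_nonneg (by linarith) (by linarith)))
    linarith

end quad


noncomputable def stmt8_phi (p b x y : ℝ) : ℝ := x ^ p + 2*b*x^(p/2)*y^(p/2) + y^p


/-- Strict midpoint convexity of φ along a segment in the open quadrant direction. -/
lemma stmt8_phi_seg (p b x1 y1 x2 y2 : ℝ) (hp : 2 < p) (hb0 : 0 ≤ b) (hb1 : b ≤ p - 1)
    (hx1 : 0 ≤ x1) (hy1 : 0 ≤ y1) (hx2 : 0 ≤ x2) (hy2 : 0 ≤ y2)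
    (hxs : 0 < x1 + x2) (hys : 0 < y1 + y2)
    (hdiag : ¬(x1 = y1 ∧ x2 = y2)) (hne : ¬(x1 = x2 ∧ y1 = y2)) :
    stmt8_phi p b ((x1+x2)/2) ((y1+y2)/2)
      < (stmt8_phi p b x1 y1 + stmt8_phi p b x2 y2)/2 := by
  have hp0 : (0:ℝ) < p := by linarith
  have hm1 : (1:ℝ) ≤ p/2 := by linarith
  have hu : ¬(x2 - x1 = 0 ∧ y2 - y1 = 0) := by
    rintro ⟨h1, h2⟩; exact hne ⟨by linarith, by linarith⟩
  set X : ℝ → ℝ := fun l => x1 + l*(x2-x1) with hX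
  set Y : ℝ → ℝ := fun l => y1 + l*(y2-y1) with hY
  have hXd : ∀ l : ℝ, HasDerivAt X (x2-x1) l := by
    intro l
    have := ((hasDerivAt_id l).mul_const (x2-x1)).const_add x1
    simpa [hX] using this
  have hYd : ∀ l : ℝ, HasDerivAt Y (y2-y1) l := by
    intro l
    have := ((hasDerivAt_id l).mul_const (y2-y1)).const_add y1
    simpa [hY] using this
  have hXpos : ∀ l ∈ Ioo (0:ℝ) 1, 0 < X l := by
    intro l hl
    obtain ⟨hl1, hl2⟩ := hl
    simp only [hX]
    rcases hx1.lt_or_eq with h | h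
    · nlinarith [mul_pos (by linarith : (0:ℝ) < 1 - l) h, mul_nonneg hl1.le hx2]
    · have h2 : 0 < x2 := by linarith
      nlinarith [mul_pos hl1 h2]
  have hYpos : ∀ l ∈ Ioo (0:ℝ) 1, 0 < Y l := by
    intro l hl
    obtain ⟨hl1, hl2⟩ := hl
    simp only [hY]
    rcases hy1.lt_or_eq with h | h
    · nlinarith [mul_pos (by linarith : (0:ℝ) < 1 - l) h, mul_nonneg hl1.le hy2]
    · have h2 : 0 < y2 := by linarith
      nlinarith [mul_pos hl1 h2]
  set psi : ℝ → ℝ := fun l => X l ^ p + 2*b*X l ^ (p/2) * Y l ^ (p/2) + Y l ^ p with hpsi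
  set D : ℝ → ℝ := fun l => p * X l ^ (p-1) * (x2-x1)
    + 2*b*((p/2) * X l ^ (p/2-1) * Y l ^ (p/2) * (x2-x1)
         + (p/2) * X l ^ (p/2) * Y l ^ (p/2-1) * (y2-y1))
    + p * Y l ^ (p-1) * (y2-y1) with hD
  set Q : ℝ → ℝ := fun l => (p*(p-1)*X l ^ (p-2)) * (x2-x1)^2
    + 2*b*( (p/2)*((p/2)-1)*X l ^ (p/2-2) * Y l ^ (p/2) * (x2-x1)^2
          + 2*((p/2)*X l ^ (p/2-1)*(x2-x1))*((p/2)*Y l ^ (p/2-1)*(y2-y1))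
          + (p/2)*((p/2)-1)*X l ^ (p/2) * Y l ^ (p/2-2) * (y2-y1)^2 )
    + (p*(p-1)*Y l ^ (p-2)) * (y2-y1)^2 with hQ
  have hDd : ∀ l : ℝ, HasDerivAt psi (D l) l := by
    intro l
    have h1 : HasDerivAt (fun l => X l ^ p) ((x2-x1) * p * X l ^ (p-1)) l :=
      (hXd l).rpow_const (Or.inr (by linarith))
    have h2 : HasDerivAt (fun l => X l ^ (p/2)) ((x2-x1) * (p/2) * X l ^ (p/2-1)) l :=
      (hXd l).rpow_const (Or.inr hm1)
    have h3 : HasDerivAt (fun l => Y l ^ p) ((y2-y1) * p * Y l ^ (p-1)) l :=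
      (hYd l).rpow_const (Or.inr (by linarith))
    have h4 : HasDerivAt (fun l => Y l ^ (p/2)) ((y2-y1) * (p/2) * Y l ^ (p/2-1)) l :=
      (hYd l).rpow_const (Or.inr hm1)
    have h5 := (h2.const_mul (2*b)).mul h4
    have h6 := (h1.add h5).add h3
    convert h6 using 1
    · rfl
    · rfl
    · rfl
    simp only [hD]
    ring
  have hQd : ∀ l ∈ Ioo (0:ℝ) 1, HasDerivAt D (Q l) l := by
    intro l hl
    have hXne : X l ≠ 0 := ne_of_gt (hXpos l hl)
    have hYne : Y l ≠ 0 := ne_of_gt (hYpos l hl)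
    have t1 : HasDerivAt (fun l => p * X l ^ (p-1) * (x2-x1))
        ((p * ((x2-x1) * (p-1) * X l ^ (p-1-1))) * (x2-x1)) l :=
      (((hXd l).rpow_const (Or.inr (by linarith))).const_mul p).mul_const (x2-x1)
    have t3 : HasDerivAt (fun l => p * Y l ^ (p-1) * (y2-y1))
        ((p * ((y2-y1) * (p-1) * Y l ^ (p-1-1))) * (y2-y1)) l :=
      (((hYd l).rpow_const (Or.inr (by linarith))).const_mul p).mul_const (y2-y1)
    have s1 : HasDerivAt (fun l => (p/2) * X l ^ (p/2-1) * Y l ^ (p/2) * (x2-x1))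
        ((((p/2) * ((x2-x1) * (p/2-1) * X l ^ (p/2-1-1))) * Y l ^ (p/2)
          + ((p/2) * X l ^ (p/2-1)) * ((y2-y1) * (p/2) * Y l ^ (p/2-1))) * (x2-x1)) l :=
      ((((hXd l).rpow_const (Or.inl hXne)).const_mul (p/2)).mul
        ((hYd l).rpow_const (Or.inr hm1))).mul_const (x2-x1)
    have s2 : HasDerivAt (fun l => (p/2) * X l ^ (p/2) * Y l ^ (p/2-1) * (y2-y1))
        ((((p/2) * ((x2-x1) * (p/2) * X l ^ (p/2-1))) * Y l ^ (p/2-1)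
          + ((p/2) * X l ^ (p/2)) * ((y2-y1) * (p/2-1) * Y l ^ (p/2-1-1))) * (y2-y1)) l :=
      ((((hXd l).rpow_const (Or.inr hm1)).const_mul (p/2)).mul
        ((hYd l).rpow_const (Or.inl hYne))).mul_const (y2-y1)
    have t2 := (s1.add s2).const_mul (2*b)
    have h6 := (t1.add t2).add t3
    convert h6 using 1
    · rfl
    · rfl
    · rfl
    simp only [hQ]
    rw [show p-1-1 = p-2 from by ring, show p/2-1-1 = p/2-2 from by ring]
    ring
  have hQnonneg : ∀ l ∈ Ioo (0:ℝ) 1, 0 ≤ Q l := by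
    intro l hl
    have hx : 0 < X l := hXpos l hl
    have hy : 0 < Y l := hYpos l hl
    set x := X l
    set y := Y l
    set e := x ^ (p/2-2) with he'
    set g := y ^ (p/2-2) with hg'
    have he : 0 < e := Real.rpow_pos_of_pos hx _
    have hg : 0 < g := Real.rpow_pos_of_pos hy _
    have hxsq : x ^ (2:ℝ) = x^2 := by
      rw [show (2:ℝ) = ((2:ℕ):ℝ) from by norm_num, Real.rpow_natCast]
    have hysq : y ^ (2:ℝ) = y^2 := by
      rw [show (2:ℝ) = ((2:ℕ):ℝ) from by norm_num, Real.rpow_natCast]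
    have hxa : x ^ (p-2) = e*(e*x^2) := by
      rw [show p-2 = (p/2-2)+((p/2-2)+2) from by ring, Real.rpow_add hx, Real.rpow_add hx, hxsq]
    have hxb : x ^ (p/2-1) = e*x := by
      rw [show p/2-1 = (p/2-2)+1 from by ring, Real.rpow_add hx, Real.rpow_one]
    have hxc : x ^ (p/2) = e*x^2 := by
      rw [show p/2 = (p/2-2)+2 from by ring, Real.rpow_add hx, hxsq]
    have hya : y ^ (p-2) = g*(g*y^2) := by
      rw [show p-2 = (p/2-2)+((p/2-2)+2) from by ring, Real.rpow_add hy, Real.rpow_add hy, hysq]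
    have hyb : y ^ (p/2-1) = g*y := by
      rw [show p/2-1 = (p/2-2)+1 from by ring, Real.rpow_add hy, Real.rpow_one]
    have hyc : y ^ (p/2) = g*y^2 := by
      rw [show p/2 = (p/2-2)+2 from by ring, Real.rpow_add hy, hysq]
    have hQl : Q l = (p*(p-1)*e^2*x^2 + 2*b*(p/2)*((p/2)-1)*e*g*y^2)*(x2-x1)^2
        + 2*(2*b*(p/2)^2*(e*x)*(g*y))*(x2-x1)*(y2-y1)
        + (p*(p-1)*g^2*y^2 + 2*b*(p/2)*((p/2)-1)*e*x^2*g)*(y2-y1)^2 := by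
      simp only [hQ]
      rw [hxa, hxb, hxc, hya, hyb, hyc]
      ring
    rw [hQl]
    exact stmt8_qf_nonneg _ _ _ _ _ (stmt8_A_pos hp hb0 he hg hx hy)
      (stmt8_det_nonneg hp hb0 hb1 he hg hx hy)
  have hQpos : ∀ l ∈ Ioo (0:ℝ) 1, X l ≠ Y l → 0 < Q l := by
    intro l hl hxyne
    have hx : 0 < X l := hXpos l hl
    have hy : 0 < Y l := hYpos l hl
    set x := X l
    set y := Y l
    set e := x ^ (p/2-2) with he'
    set g := y ^ (p/2-2) with hg'
    have he : 0 < e := Real.rpow_pos_of_pos hx _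
    have hg : 0 < g := Real.rpow_pos_of_pos hy _
    have hxsq : x ^ (2:ℝ) = x^2 := by
      rw [show (2:ℝ) = ((2:ℕ):ℝ) from by norm_num, Real.rpow_natCast]
    have hysq : y ^ (2:ℝ) = y^2 := by
      rw [show (2:ℝ) = ((2:ℕ):ℝ) from by norm_num, Real.rpow_natCast]
    have hxa : x ^ (p-2) = e*(e*x^2) := by
      rw [show p-2 = (p/2-2)+((p/2-2)+2) from by ring, Real.rpow_add hx, Real.rpow_add hx, hxsq]
    have hxb : x ^ (p/2-1) = e*x := by
      rw [show p/2-1 = (p/2-2)+1 from by ring, Real.rpow_add hx, Real.rpow_one]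
    have hxc : x ^ (p/2) = e*x^2 := by
      rw [show p/2 = (p/2-2)+2 from by ring, Real.rpow_add hx, hxsq]
    have hya : y ^ (p-2) = g*(g*y^2) := by
      rw [show p-2 = (p/2-2)+((p/2-2)+2) from by ring, Real.rpow_add hy, Real.rpow_add hy, hysq]
    have hyb : y ^ (p/2-1) = g*y := by
      rw [show p/2-1 = (p/2-2)+1 from by ring, Real.rpow_add hy, Real.rpow_one]
    have hyc : y ^ (p/2) = g*y^2 := by
      rw [show p/2 = (p/2-2)+2 from by ring, Real.rpow_add hy, hysq]
    have hxy : e*x^2 ≠ g*y^2 := by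
      rw [← hxc, ← hyc]
      rcases lt_trichotomy x y with h | h | h
      · exact ne_of_lt (Real.rpow_lt_rpow hx.le h (by linarith))
      · exact absurd h hxyne
      · exact ne_of_gt (Real.rpow_lt_rpow hy.le h (by linarith))
    have hQl : Q l = (p*(p-1)*e^2*x^2 + 2*b*(p/2)*((p/2)-1)*e*g*y^2)*(x2-x1)^2
        + 2*(2*b*(p/2)^2*(e*x)*(g*y))*(x2-x1)*(y2-y1)
        + (p*(p-1)*g^2*y^2 + 2*b*(p/2)*((p/2)-1)*e*x^2*g)*(y2-y1)^2 := by
      simp only [hQ]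
      rw [hxa, hxb, hxc, hya, hyb, hyc]
      ring
    rw [hQl]
    exact stmt8_qf_pos _ _ _ _ _ (stmt8_A_pos hp hb0 he hg hx hy)
      (stmt8_det_pos hp hb0 hb1 he hg hx hy hxy) hu
  -- continuity of D
  have hXc : Continuous X := by
    simp only [hX]; exact continuous_const.add (continuous_id.mul continuous_const)
  have hYc : Continuous Y := by
    simp only [hY]; exact continuous_const.add (continuous_id.mul continuous_const)
  have hDcont : Continuous D := by
    simp only [hD]
    refine Continuous.add (Continuous.add ?_ ?_) ?_
    · exact (continuous_const.mul (hXc.rpow_const (fun z => Or.inr (by linarith)))).mul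
        continuous_const
    · refine Continuous.mul continuous_const (Continuous.add ?_ ?_)
      · exact ((continuous_const.mul (hXc.rpow_const (fun z => Or.inr (by linarith)))).mul
          (hYc.rpow_const (fun z => Or.inr (by linarith)))).mul continuous_const
      · exact ((continuous_const.mul (hXc.rpow_const (fun z => Or.inr (by linarith)))).mul
          (hYc.rpow_const (fun z => Or.inr (by linarith)))).mul continuous_const
    · exact (continuous_const.mul (hYc.rpow_const (fun z => Or.inr (by linarith)))).mul
        continuous_const
  -- E subsingleton
  have hEsub : ∀ l l' : ℝ, X l = Y l → X l' = Y l' → l = l' := by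
    intro l l' h h'
    by_contra hll
    simp only [hX, hY] at h h'
    have key : (l - l') * ((x2-x1)-(y2-y1)) = 0 := by linear_combination h - h'
    have hd : (x2-x1)-(y2-y1) = 0 := by
      rcases mul_eq_zero.1 key with h0 | h0
      · exact absurd (by linarith : l = l') hll
      · exact h0
    have hxy1 : x1 = y1 := by linear_combination h - l*hd
    have hxy2 : x2 = y2 := by linear_combination h - l*hd + hd
    exact hdiag ⟨hxy1, hxy2⟩
  -- strict monotonicity of D on Ioo 0 1
  have hmono : StrictMonoOn D (Ioo (0:ℝ) 1) := by
    intro la hla lb hlb hab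
    have hsubI : Icc la lb ⊆ Ioo (0:ℝ) 1 := fun z hz =>
      ⟨lt_of_lt_of_le hla.1 hz.1, lt_of_le_of_lt hz.2 hlb.2⟩
    have hmoIcc : MonotoneOn D (Icc la lb) := by
      apply monotoneOn_of_deriv_nonneg (convex_Icc la lb) hDcont.continuousOn
      · intro z hz
        rw [interior_Icc] at hz
        exact ((hQd z (hsubI (Ioo_subset_Icc_self hz))).differentiableAt).differentiableWithinAt
      · intro z hz
        rw [interior_Icc] at hz
        rw [(hQd z (hsubI (Ioo_subset_Icc_self hz))).deriv]
        exact hQnonneg z (hsubI (Ioo_subset_Icc_self hz))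
    have hstrict : ∀ s t : ℝ, la ≤ s → s < t → t ≤ lb →
        (∀ z, s < z → z < t → X z ≠ Y z) → D s < D t := by
      intro s t hs hst ht hfree
      have hsub2 : Icc s t ⊆ Ioo (0:ℝ) 1 := fun z hz =>
        hsubI ⟨le_trans hs hz.1, le_trans hz.2 ht⟩
      have := strictMonoOn_of_deriv_pos (convex_Icc s t) hDcont.continuousOn
        (f := D) ?_ (Set.left_mem_Icc.2 hst.le) (Set.right_mem_Icc.2 hst.le) hst
      · exact this
      · intro z hz
        rw [interior_Icc] at hz
        rw [(hQd z (hsub2 (Ioo_subset_Icc_self hz))).deriv]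
        exact hQpos z (hsub2 (Ioo_subset_Icc_self hz)) (hfree z hz.1 hz.2)
    set c1 := la + (lb-la)/3 with hc1
    set c2 := la + 2*(lb-la)/3 with hc2
    have h1 : la < c1 := by simp only [hc1]; linarith
    have h2 : c1 < c2 := by simp only [hc1, hc2]; linarith
    have h3 : c2 < lb := by simp only [hc2]; linarith
    by_cases hex : ∃ z, la < z ∧ z < c1 ∧ X z = Y z
    · obtain ⟨z0, hz01, hz02, hz0e⟩ := hex
      have hfree : ∀ z, c2 < z → z < lb → X z ≠ Y z := by
        intro z hza hzb heq
        have := hEsub z z0 heq hz0e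
        linarith [this]
      calc D la ≤ D c2 := hmoIcc (Set.left_mem_Icc.2 hab.le)
                  ⟨by linarith, by linarith⟩ (by linarith)
        _ < D lb := hstrict c2 lb (by linarith) h3 le_rfl hfree
    · push_neg at hex
      have hfree : ∀ z, la < z → z < c1 → X z ≠ Y z := by
        intro z hza hzb heq
        exact absurd heq (hex z hza hzb)
      calc D la < D c1 := hstrict la c1 le_rfl h1 (by linarith) hfree
        _ ≤ D lb := hmoIcc ⟨by linarith, by linarith⟩
              (Set.right_mem_Icc.2 hab.le) (by linarith)
  -- strict convexity of psi
  have hpsidiff : Differentiable ℝ psi := fun l => (hDd l).differentiableAt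
  have hSC : StrictConvexOn ℝ (Icc (0:ℝ) 1) psi := by
    apply StrictMonoOn.strictConvexOn_of_deriv (convex_Icc 0 1)
      hpsidiff.continuous.continuousOn
    rw [interior_Icc]
    intro u hu' v hv' huv
    rw [(hDd u).deriv, (hDd v).deriv]
    exact hmono hu' hv' huv
  have hkey := hSC.2 (Set.left_mem_Icc.2 (by norm_num : (0:ℝ) ≤ 1))
    (Set.right_mem_Icc.2 (by norm_num : (0:ℝ) ≤ 1)) (by norm_num)
    (by norm_num : (0:ℝ) < 1/2) (by norm_num : (0:ℝ) < 1/2) (by norm_num)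
  simp only [smul_eq_mul, mul_zero, mul_one, zero_add] at hkey
  have e0 : psi 0 = stmt8_phi p b x1 y1 := by
    simp only [hpsi, hX, hY, stmt8_phi]
    norm_num
  have e1 : psi 1 = stmt8_phi p b x2 y2 := by
    simp only [hpsi, hX, hY, stmt8_phi]
    norm_num
  have e2 : psi (1/2) = stmt8_phi p b ((x1+x2)/2) ((y1+y2)/2) := by
    simp only [hpsi, hX, hY, stmt8_phi]
    rw [show x1 + 1/2*(x2-x1) = (x1+x2)/2 from by ring,
        show y1 + 1/2*(y2-y1) = (y1+y2)/2 from by ring]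
  rw [e0, e1, e2] at hkey
  linarith


lemma stmt8_rpow_mid {p : ℝ} (hp : 1 < p) {u w : ℝ} (hu : 0 ≤ u) (hw : 0 ≤ w) (huw : u ≠ w) :
    ((u+w)/2)^p < (u^p + w^p)/2 := by
  have h := (strictConvexOn_rpow hp).2 (Set.mem_Ici.2 hu) (Set.mem_Ici.2 hw) huw
    (by norm_num : (0:ℝ) < 1/2) (by norm_num : (0:ℝ) < 1/2) (by norm_num)
  simp only [smul_eq_mul] at h
  rw [show (1/2)*u + (1/2)*w = (u+w)/2 from by ring] at h
  linarith

lemma stmt8_phi_comm (p b x y : ℝ) : stmt8_phi p b x y = stmt8_phi p b y x := by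
  simp only [stmt8_phi]; ring

lemma stmt8_phi_zero_left {p : ℝ} (hp : 2 < p) (b y : ℝ) : stmt8_phi p b 0 y = y ^ p := by
  simp only [stmt8_phi]
  rw [Real.zero_rpow (by linarith : p ≠ 0), Real.zero_rpow (by intro h; nlinarith [h] : p/2 ≠ 0)]
  ring

lemma stmt8_phi_diag {p : ℝ} (hp : 2 < p) (b : ℝ) {x : ℝ} (hx : 0 ≤ x) :
    stmt8_phi p b x x = (2+2*b) * x ^ p := by
  simp only [stmt8_phi]
  have h : x^(p/2)*x^(p/2) = x^(p/2+p/2) :=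
    (Real.rpow_add' hx (by intro h'; nlinarith [h'])).symm
  rw [show p/2+p/2 = p from by ring] at h
  linear_combination (2*b)*h

lemma stmt8_phi_nonneg {p b : ℝ} (hp : 2 < p) (hb0 : 0 ≤ b) {x y : ℝ} (hx : 0 ≤ x) (hy : 0 ≤ y) :
    0 ≤ stmt8_phi p b x y := by
  simp only [stmt8_phi]
  have h1 : (0:ℝ) ≤ x^p := Real.rpow_nonneg hx p
  have h2 : (0:ℝ) ≤ y^p := Real.rpow_nonneg hy p
  have h3 : (0:ℝ) ≤ 2*b*x^(p/2)*y^(p/2) :=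
    mul_nonneg (mul_nonneg (by linarith) (Real.rpow_nonneg hx _)) (Real.rpow_nonneg hy _)
  linarith

lemma stmt8_phi_mono {p b : ℝ} (hp : 2 < p) (hb0 : 0 ≤ b) {x y x' y' : ℝ}
    (hx : 0 ≤ x) (hy : 0 ≤ y) (hx' : x ≤ x') (hy' : y ≤ y') :
    stmt8_phi p b x y ≤ stmt8_phi p b x' y' := by
  simp only [stmt8_phi]
  have h1 : x^p ≤ x'^p := Real.rpow_le_rpow hx hx' (by linarith)
  have h2 : y^p ≤ y'^p := Real.rpow_le_rpow hy hy' (by linarith)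
  have h3 : x^(p/2) ≤ x'^(p/2) := Real.rpow_le_rpow hx hx' (by linarith)
  have h4 : y^(p/2) ≤ y'^(p/2) := Real.rpow_le_rpow hy hy' (by linarith)
  have h5 : 2*b*x^(p/2)*y^(p/2) ≤ 2*b*x'^(p/2)*y'^(p/2) := by
    apply mul_le_mul (mul_le_mul_of_nonneg_left h3 (by linarith)) h4 (Real.rpow_nonneg hy _)
    exact mul_nonneg (by linarith) (Real.rpow_nonneg (le_trans hx hx') _)
  linarith

lemma stmt8_phi_lt_left {p b : ℝ} (hp : 2 < p) (hb0 : 0 ≤ b) {x y : ℝ}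
    (hx : 0 < x) (hy : 0 ≤ y) : stmt8_phi p b 0 y < stmt8_phi p b x y := by
  rw [stmt8_phi_zero_left hp]
  simp only [stmt8_phi]
  have h1 : (0:ℝ) < x^p := Real.rpow_pos_of_pos hx p
  have h3 : (0:ℝ) ≤ 2*b*x^(p/2)*y^(p/2) :=
    mul_nonneg (mul_nonneg (by linarith) (Real.rpow_nonneg hx.le _)) (Real.rpow_nonneg hy _)
  linarith

/-- Strict midpoint convexity of φ on the closed quadrant. -/
lemma stmt8_phi_mid (p b : ℝ) (hp : 2 < p) (hb0 : 0 ≤ b) (hb1 : b ≤ p - 1)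
    {x1 y1 x2 y2 : ℝ} (hx1 : 0 ≤ x1) (hy1 : 0 ≤ y1) (hx2 : 0 ≤ x2) (hy2 : 0 ≤ y2)
    (hne : ¬(x1 = x2 ∧ y1 = y2)) :
    stmt8_phi p b ((x1+x2)/2) ((y1+y2)/2)
      < (stmt8_phi p b x1 y1 + stmt8_phi p b x2 y2)/2 := by
  by_cases hxz : x1 = 0 ∧ x2 = 0
  · obtain ⟨h1, h2⟩ := hxz
    subst h1; subst h2
    have hyne : y1 ≠ y2 := fun h => hne ⟨rfl, h⟩
    rw [show ((0:ℝ)+0)/2 = 0 from by norm_num, stmt8_phi_zero_left hp,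
      stmt8_phi_zero_left hp, stmt8_phi_zero_left hp]
    exact stmt8_rpow_mid (by linarith) hy1 hy2 hyne
  by_cases hyz : y1 = 0 ∧ y2 = 0
  · obtain ⟨h1, h2⟩ := hyz
    subst h1; subst h2
    have hxne : x1 ≠ x2 := fun h => hne ⟨h, rfl⟩
    rw [show ((0:ℝ)+0)/2 = 0 from by norm_num, stmt8_phi_comm p b _ 0,
      stmt8_phi_comm p b x1 0, stmt8_phi_comm p b x2 0, stmt8_phi_zero_left hp,
      stmt8_phi_zero_left hp, stmt8_phi_zero_left hp]
    exact stmt8_rpow_mid (by linarith) hx1 hx2 hxne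
  by_cases hdiag : x1 = y1 ∧ x2 = y2
  · obtain ⟨h1, h2⟩ := hdiag
    subst h1; subst h2
    have hxne : x1 ≠ x2 := fun h => hne ⟨h, h⟩
    rw [stmt8_phi_diag hp b (by linarith : (0:ℝ) ≤ (x1+x2)/2), stmt8_phi_diag hp b hx1,
      stmt8_phi_diag hp b hx2]
    have h := stmt8_rpow_mid (by linarith : (1:ℝ) < p) hx1 hx2 hxne
    nlinarith [h]
  · push_neg at hxz hyz
    have hxs : 0 < x1 + x2 := by
      rcases hx1.lt_or_eq with h | h
      · linarith
      · rcases hx2.lt_or_eq with h' | h'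
        · linarith
        · exact absurd h'.symm (hxz h.symm)
    have hys : 0 < y1 + y2 := by
      rcases hy1.lt_or_eq with h | h
      · linarith
      · rcases hy2.lt_or_eq with h' | h'
        · linarith
        · exact absurd h'.symm (hyz h.symm)
    exact stmt8_phi_seg p b x1 y1 x2 y2 hp hb0 hb1 hx1 hy1 hx2 hy2 hxs hys hdiag hne

noncomputable def stmt8_F (p a b : ℝ) (v : ℝ × ℝ) : ℝ :=
  (a / p) * (|v.1| ^ p + 2 * b * |v.1| ^ (p / 2) * |v.2| ^ (p / 2) + |v.2| ^ p)

lemma stmt8_F_phi (p a b : ℝ) (v : ℝ × ℝ) :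
    stmt8_F p a b v = (a/p) * stmt8_phi p b |v.1| |v.2| := rfl

/-- Strict midpoint convexity of F. -/
lemma stmt8_F_mid {p a b : ℝ} (hp : 2 < p) (ha : 0 < a) (hb0 : 0 ≤ b) (hb1 : b ≤ p - 1)
    (v w : ℝ × ℝ) (hvw : v ≠ w) :
    stmt8_F p a b ((v.1+w.1)/2, (v.2+w.2)/2) < (stmt8_F p a b v + stmt8_F p a b w)/2 := by
  have hap : 0 < a/p := div_pos ha (by linarith)
  simp only [stmt8_F_phi]
  have key : stmt8_phi p b |((v.1+w.1)/2, (v.2+w.2)/2).1| |((v.1+w.1)/2, (v.2+w.2)/2).2|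
      < (stmt8_phi p b |v.1| |v.2| + stmt8_phi p b |w.1| |w.2|)/2 := by
    simp only
    have hm1 : |(v.1+w.1)/2| ≤ (|v.1|+|w.1|)/2 := by
      rw [abs_div, abs_two]
      exact div_le_div_of_nonneg_right (abs_add_le _ _) (by norm_num)
    have hm2 : |(v.2+w.2)/2| ≤ (|v.2|+|w.2|)/2 := by
      rw [abs_div, abs_two]
      exact div_le_div_of_nonneg_right (abs_add_le _ _) (by norm_num)
    by_cases habs : |v.1| = |w.1| ∧ |v.2| = |w.2|
    · -- equal absolute values; signs must differ in some coordinate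
      obtain ⟨ha1, ha2⟩ := habs
      have hcoord : v.1 ≠ w.1 ∨ v.2 ≠ w.2 := by
        by_contra hc
        push_neg at hc
        exact hvw (Prod.ext hc.1 hc.2)
      have havg1 : (|v.1|+|w.1|)/2 = |v.1| := by rw [← ha1]; ring
      have havg2 : (|v.2|+|w.2|)/2 = |v.2| := by rw [← ha2]; ring
      have hphieq : stmt8_phi p b |w.1| |w.2| = stmt8_phi p b |v.1| |v.2| := by
        rw [ha1, ha2]
      rcases hcoord with hc | hc
      · have hsign : v.1 = -w.1 := by
          rcases abs_eq_abs.1 ha1 with h | h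
          · exact absurd h hc
          · exact h
        have hw1 : w.1 ≠ 0 := by
          intro h0
          rw [h0] at hsign
          simp at hsign
          exact hc (by rw [hsign, h0])
        have hmid0 : |(v.1+w.1)/2| = 0 := by
          rw [hsign]; norm_num
        calc stmt8_phi p b |(v.1+w.1)/2| |(v.2+w.2)/2|
            = stmt8_phi p b 0 |(v.2+w.2)/2| := by rw [hmid0]
          _ ≤ stmt8_phi p b 0 |v.2| := by
              apply stmt8_phi_mono hp hb0 le_rfl (abs_nonneg _) le_rfl
              calc |(v.2+w.2)/2| ≤ (|v.2|+|w.2|)/2 := hm2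
                _ = |v.2| := havg2
          _ < stmt8_phi p b |v.1| |v.2| := by
              apply stmt8_phi_lt_left hp hb0 _ (abs_nonneg _)
              rw [ha1]
              exact abs_pos.2 hw1
          _ = (stmt8_phi p b |v.1| |v.2| + stmt8_phi p b |w.1| |w.2|)/2 := by
              rw [hphieq]; ring
      · have hsign : v.2 = -w.2 := by
          rcases abs_eq_abs.1 ha2 with h | h
          · exact absurd h hc
          · exact h
        have hw2 : w.2 ≠ 0 := by
          intro h0
          rw [h0] at hsign
          simp at hsign
          exact hc (by rw [hsign, h0])
        have hmid0 : |(v.2+w.2)/2| = 0 := by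
          rw [hsign]; norm_num
        calc stmt8_phi p b |(v.1+w.1)/2| |(v.2+w.2)/2|
            = stmt8_phi p b |(v.1+w.1)/2| 0 := by rw [hmid0]
          _ ≤ stmt8_phi p b |v.1| 0 := by
              apply stmt8_phi_mono hp hb0 (abs_nonneg _) le_rfl _ le_rfl
              calc |(v.1+w.1)/2| ≤ (|v.1|+|w.1|)/2 := hm1
                _ = |v.1| := havg1
          _ < stmt8_phi p b |v.1| |v.2| := by
              rw [stmt8_phi_comm p b _ 0, stmt8_phi_comm p b |v.1| |v.2|]
              apply stmt8_phi_lt_left hp hb0 _ (abs_nonneg _)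
              rw [ha2]
              exact abs_pos.2 hw2
          _ = (stmt8_phi p b |v.1| |v.2| + stmt8_phi p b |w.1| |w.2|)/2 := by
              rw [hphieq]; ring
    · calc stmt8_phi p b |(v.1+w.1)/2| |(v.2+w.2)/2|
          ≤ stmt8_phi p b ((|v.1|+|w.1|)/2) ((|v.2|+|w.2|)/2) :=
            stmt8_phi_mono hp hb0 (abs_nonneg _) (abs_nonneg _) hm1 hm2
        _ < (stmt8_phi p b |v.1| |v.2| + stmt8_phi p b |w.1| |w.2|)/2 :=
            stmt8_phi_mid p b hp hb0 hb1 (abs_nonneg _) (abs_nonneg _) (abs_nonneg _)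
              (abs_nonneg _) habs
  nlinarith [key, hap]


noncomputable def stmt8_g (p a b : ℝ) (q v : ℝ × ℝ) : ℝ :=
  v.1 * q.1 + v.2 * q.2 - stmt8_F p a b v

section main
variable {p a b : ℝ}

lemma stmt8_F_lower (hp : 2 < p) (ha : 0 < a) (hb0 : 0 ≤ b) (v : ℝ × ℝ) :
    (a/p) * ‖v‖^p ≤ stmt8_F p a b v := by
  have hap : 0 < a/p := div_pos ha (by linarith)
  have hnorm : ‖v‖ = max |v.1| |v.2| := by
    rw [Prod.norm_def, Real.norm_eq_abs, Real.norm_eq_abs]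
  have hterm : ‖v‖^p ≤ |v.1| ^ p + 2 * b * |v.1| ^ (p / 2) * |v.2| ^ (p / 2) + |v.2| ^ p := by
    have hcross : (0:ℝ) ≤ 2 * b * |v.1| ^ (p / 2) * |v.2| ^ (p / 2) :=
      mul_nonneg (mul_nonneg (by linarith) (Real.rpow_nonneg (abs_nonneg _) _))
        (Real.rpow_nonneg (abs_nonneg _) _)
    have h1 : (0:ℝ) ≤ |v.1| ^ p := Real.rpow_nonneg (abs_nonneg _) _
    have h2 : (0:ℝ) ≤ |v.2| ^ p := Real.rpow_nonneg (abs_nonneg _) _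
    rcases max_cases |v.1| |v.2| with ⟨hm, _⟩ | ⟨hm, _⟩ <;> rw [hnorm, hm] <;> linarith
  calc (a/p) * ‖v‖^p ≤ (a/p) * (|v.1| ^ p + 2 * b * |v.1| ^ (p / 2) * |v.2| ^ (p / 2) + |v.2| ^ p) :=
        mul_le_mul_of_nonneg_left hterm hap.le
    _ = stmt8_F p a b v := rfl

lemma stmt8_F_nonneg (hp : 2 < p) (ha : 0 < a) (hb0 : 0 ≤ b) (v : ℝ × ℝ) :
    0 ≤ stmt8_F p a b v := by
  have := stmt8_F_lower hp ha hb0 (b := b) v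
  have h0 : (0:ℝ) ≤ (a/p) * ‖v‖^p :=
    mul_nonneg (div_pos ha (by linarith)).le (Real.rpow_nonneg (norm_nonneg _) _)
  linarith

lemma stmt8_F_zero (hp : 2 < p) (a b : ℝ) : stmt8_F p a b 0 = 0 := by
  simp only [stmt8_F, Prod.fst_zero, Prod.snd_zero, abs_zero]
  rw [Real.zero_rpow (by linarith : p ≠ 0), Real.zero_rpow (by intro h'; nlinarith [h'] : p/2 ≠ 0)]
  ring

lemma stmt8_F_cont (hp : 2 < p) (a b : ℝ) : Continuous (stmt8_F p a b) := by
  have h1 : Continuous fun v : ℝ × ℝ => |v.1| ^ p :=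
    (continuous_fst.abs).rpow_const (fun z => Or.inr (by linarith))
  have h2 : Continuous fun v : ℝ × ℝ => |v.2| ^ p :=
    (continuous_snd.abs).rpow_const (fun z => Or.inr (by linarith))
  have h3 : Continuous fun v : ℝ × ℝ => |v.1| ^ (p/2) :=
    (continuous_fst.abs).rpow_const (fun z => Or.inr (by linarith))
  have h4 : Continuous fun v : ℝ × ℝ => |v.2| ^ (p/2) :=
    (continuous_snd.abs).rpow_const (fun z => Or.inr (by linarith))
  exact continuous_const.mul ((h1.add (((continuous_const.mul h3)).mul h4)).add h2)

lemma stmt8_g_cont (hp : 2 < p) (a b : ℝ) (q : ℝ × ℝ) : Continuous (stmt8_g p a b q) :=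
  ((continuous_fst.mul continuous_const).add (continuous_snd.mul continuous_const)).sub
    (stmt8_F_cont hp a b)

lemma stmt8_g_zero (hp : 2 < p) (a b : ℝ) (q : ℝ × ℝ) : stmt8_g p a b q 0 = 0 := by
  simp only [stmt8_g, Prod.fst_zero, Prod.snd_zero, stmt8_F_zero hp a b]
  ring

lemma stmt8_g_upper (hp : 2 < p) (ha : 0 < a) (hb0 : 0 ≤ b) (q v : ℝ × ℝ) :
    stmt8_g p a b q v ≤ 2*‖q‖*‖v‖ - (a/p)*‖v‖^p := by
  have h1 : v.1 * q.1 ≤ ‖v‖ * ‖q‖ := by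
    calc v.1 * q.1 ≤ |v.1 * q.1| := le_abs_self _
      _ = |v.1| * |q.1| := abs_mul _ _
      _ ≤ ‖v‖ * ‖q‖ := by
          apply mul_le_mul ?_ ?_ (abs_nonneg _) (norm_nonneg _)
          · exact (Real.norm_eq_abs v.1) ▸ norm_fst_le v
          · exact (Real.norm_eq_abs q.1) ▸ norm_fst_le q
  have h2 : v.2 * q.2 ≤ ‖v‖ * ‖q‖ := by
    calc v.2 * q.2 ≤ |v.2 * q.2| := le_abs_self _
      _ = |v.2| * |q.2| := abs_mul _ _
      _ ≤ ‖v‖ * ‖q‖ := by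
          apply mul_le_mul ?_ ?_ (abs_nonneg _) (norm_nonneg _)
          · exact (Real.norm_eq_abs v.2) ▸ norm_snd_le v
          · exact (Real.norm_eq_abs q.2) ▸ norm_snd_le q
  have h3 := stmt8_F_lower hp ha hb0 (b := b) v
  simp only [stmt8_g]
  nlinarith [h1, h2, h3]

lemma stmt8_g_big (hp : 2 < p) (ha : 0 < a) (hb0 : 0 ≤ b) (q v : ℝ × ℝ)
    (hv : max 1 ((2*‖q‖*p/a) ^ (p-1)⁻¹) < ‖v‖) : stmt8_g p a b q v ≤ 0 := by
  have hp0 : (0:ℝ) < p := by linarith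
  have h1 : (1:ℝ) < ‖v‖ := lt_of_le_of_lt (le_max_left _ _) hv
  have hvpos : (0:ℝ) < ‖v‖ := by linarith
  have h2 : (2*‖q‖*p/a) ^ (p-1)⁻¹ < ‖v‖ := lt_of_le_of_lt (le_max_right _ _) hv
  have hbase : (0:ℝ) ≤ 2*‖q‖*p/a := by positivity
  have h3 : 2*‖q‖*p/a ≤ ‖v‖^(p-1) := by
    calc 2*‖q‖*p/a = ((2*‖q‖*p/a) ^ (p-1)⁻¹)^(p-1) :=
          (Real.rpow_inv_rpow hbase (by intro h'; nlinarith [h'] : p-1 ≠ 0)).symm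
      _ ≤ ‖v‖^(p-1) :=
          Real.rpow_le_rpow (Real.rpow_nonneg hbase _) h2.le (by linarith)
  have h4 : ‖v‖^p = ‖v‖^(p-1) * ‖v‖ := by
    rw [show p = (p-1)+1 from by ring, Real.rpow_add hvpos, Real.rpow_one]
    ring_nf
  have h5 := stmt8_g_upper hp ha hb0 (b := b) q v
  have h6 : 2*‖q‖ ≤ (a/p) * ‖v‖^(p-1) := by
    have := mul_le_mul_of_nonneg_left h3 (le_of_lt (div_pos ha hp0))
    calc 2*‖q‖ = (a/p) * (2*‖q‖*p/a) := by field_simp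
      _ ≤ (a/p) * ‖v‖^(p-1) := this
  have h7 : 2*‖q‖*‖v‖ ≤ (a/p) * ‖v‖^p := by
    rw [h4]
    calc 2*‖q‖*‖v‖ ≤ ((a/p) * ‖v‖^(p-1)) * ‖v‖ := mul_le_mul_of_nonneg_right h6 hvpos.le
      _ = a/p*(‖v‖^(p-1) * ‖v‖) := by ring
  linarith

lemma stmt8_exists_max (hp : 2 < p) (ha : 0 < a) (hb0 : 0 ≤ b) (q : ℝ × ℝ) :
    ∃ v, ∀ u, stmt8_g p a b q u ≤ stmt8_g p a b q v := by
  apply Continuous.exists_forall_ge' (stmt8_g_cont hp a b q) 0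
  have hK := (isCompact_closedBall (0:ℝ×ℝ) (max 1 ((2*‖q‖*p/a) ^ (p-1)⁻¹))).compl_mem_cocompact
  filter_upwards [hK] with v hv
  rw [Set.mem_compl_iff, Metric.mem_closedBall, not_le, dist_zero_right] at hv
  rw [stmt8_g_zero hp a b q]
  exact stmt8_g_big hp ha hb0 q v hv

lemma stmt8_max_unique (hp : 2 < p) (ha : 0 < a) (hb0 : 0 ≤ b) (hb1 : b ≤ p - 1)
    {q v w : ℝ × ℝ} (hv : ∀ u, stmt8_g p a b q u ≤ stmt8_g p a b q v)
    (hw : ∀ u, stmt8_g p a b q u ≤ stmt8_g p a b q w) : v = w := by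
  by_contra hne
  have h1 : stmt8_g p a b q v = stmt8_g p a b q w := le_antisymm (hw v) (hv w)
  have hm := hv ((v.1+w.1)/2, (v.2+w.2)/2)
  have hF := stmt8_F_mid hp ha hb0 hb1 v w hne
  simp only [stmt8_g] at hm h1
  linarith

lemma stmt8_vbound (hp : 2 < p) (ha : 0 < a) (hb0 : 0 ≤ b) (q v : ℝ × ℝ)
    (hmax : ∀ u, stmt8_g p a b q u ≤ stmt8_g p a b q v) :
    ‖v‖ ≤ max 1 ((2*‖q‖*p/a) ^ (p-1)⁻¹) := by
  by_contra hcon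
  push_neg at hcon
  have h1 := stmt8_g_big hp ha hb0 q v hcon
  have h2 := hmax 0
  rw [stmt8_g_zero hp a b q] at h2
  have h3 : stmt8_g p a b q v = 0 := le_antisymm h1 h2
  -- then g q v = 0, but also ‖v‖ > 1 > 0 gives F v > 0 strict... derive contradiction:
  -- g q v ≤ 2‖q‖‖v‖ - (a/p)‖v‖^p < 0 strictly since ‖v‖ > R
  have hp0 : (0:ℝ) < p := by linarith
  have h1' : (1:ℝ) < ‖v‖ := lt_of_le_of_lt (le_max_left _ _) hcon
  have hvpos : (0:ℝ) < ‖v‖ := by linarith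
  have h2' : (2*‖q‖*p/a) ^ (p-1)⁻¹ < ‖v‖ := lt_of_le_of_lt (le_max_right _ _) hcon
  have hbase : (0:ℝ) ≤ 2*‖q‖*p/a := by positivity
  have h3' : 2*‖q‖*p/a < ‖v‖^(p-1) := by
    calc 2*‖q‖*p/a = ((2*‖q‖*p/a) ^ (p-1)⁻¹)^(p-1) :=
          (Real.rpow_inv_rpow hbase (by intro h'; nlinarith [h'] : p-1 ≠ 0)).symm
      _ < ‖v‖^(p-1) :=
          Real.rpow_lt_rpow (Real.rpow_nonneg hbase _) h2' (by linarith)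
  have h4 : ‖v‖^p = ‖v‖^(p-1) * ‖v‖ := by
    rw [show p = (p-1)+1 from by ring, Real.rpow_add hvpos, Real.rpow_one]
    ring_nf
  have h5 := stmt8_g_upper hp ha hb0 (b := b) q v
  have h6 : 2*‖q‖ < (a/p) * ‖v‖^(p-1) := by
    have := mul_lt_mul_of_pos_left h3' (div_pos ha hp0)
    calc 2*‖q‖ = (a/p) * (2*‖q‖*p/a) := by field_simp
      _ < (a/p) * ‖v‖^(p-1) := this
  have h7 : 2*‖q‖*‖v‖ < (a/p) * ‖v‖^p := by
    rw [h4]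
    calc 2*‖q‖*‖v‖ < ((a/p) * ‖v‖^(p-1)) * ‖v‖ := by
          apply mul_lt_mul_of_pos_right h6 hvpos
      _ = a/p*(‖v‖^(p-1) * ‖v‖) := by ring
  linarith

lemma stmt8_g_shift (q q' w : ℝ × ℝ) :
    stmt8_g p a b q' w - stmt8_g p a b q w = w.1*(q'.1-q.1) + w.2*(q'.2-q.2) := by
  simp only [stmt8_g]; ring

lemma stmt8_inner_bound (w u : ℝ × ℝ) : w.1*u.1 + w.2*u.2 ≤ 2*‖w‖*‖u‖ := by
  have h1 : w.1 * u.1 ≤ ‖w‖ * ‖u‖ := by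
    calc w.1 * u.1 ≤ |w.1 * u.1| := le_abs_self _
      _ = |w.1| * |u.1| := abs_mul _ _
      _ ≤ ‖w‖ * ‖u‖ := by
          apply mul_le_mul ?_ ?_ (abs_nonneg _) (norm_nonneg _)
          · exact (Real.norm_eq_abs w.1) ▸ norm_fst_le w
          · exact (Real.norm_eq_abs u.1) ▸ norm_fst_le u
  have h2 : w.2 * u.2 ≤ ‖w‖ * ‖u‖ := by
    calc w.2 * u.2 ≤ |w.2 * u.2| := le_abs_self _
      _ = |w.2| * |u.2| := abs_mul _ _
      _ ≤ ‖w‖ * ‖u‖ := by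
          apply mul_le_mul ?_ ?_ (abs_nonneg _) (norm_nonneg _)
          · exact (Real.norm_eq_abs w.2) ▸ norm_snd_le w
          · exact (Real.norm_eq_abs u.2) ▸ norm_snd_le u
  linarith

end main


section part5
variable {p a b : ℝ}

/-- Continuity of the (unique) maximizer selection at every point. -/
lemma stmt8_vmax_cont (hp : 2 < p) (ha : 0 < a) (hb0 : 0 ≤ b) (hb1 : b ≤ p - 1)
    (vm : ℝ × ℝ → ℝ × ℝ) (hvm : ∀ q u, stmt8_g p a b q u ≤ stmt8_g p a b q (vm q))
    (q : ℝ × ℝ) {ε : ℝ} (hε : 0 < ε) :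
    ∀ᶠ q' in nhds q, ‖vm q' - vm q‖ ≤ ε := by
  have hp0 : (0:ℝ) < p := by linarith
  set R : ℝ := max 1 ((2*(‖q‖+1)*p/a) ^ (p-1)⁻¹) with hR
  have hR1 : (1:ℝ) ≤ R := le_max_left _ _
  have hR0 : (0:ℝ) < R := by linarith
  -- uniform bound for the maximizers of nearby points
  have hbnd : ∀ q' : ℝ × ℝ, ‖q'‖ ≤ ‖q‖ + 1 → ‖vm q'‖ ≤ R := by
    intro q' hq'
    have h1 := stmt8_vbound hp ha hb0 q' (vm q') (hvm q')
    have h2 : (2*‖q'‖*p/a) ^ (p-1)⁻¹ ≤ (2*(‖q‖+1)*p/a) ^ (p-1)⁻¹ := by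
      apply Real.rpow_le_rpow (div_nonneg (by positivity) ha.le) ?_
        (le_of_lt (inv_pos.2 (by linarith)))
      apply (div_le_div_iff_of_pos_right ha).2
      nlinarith [hq', hp0, norm_nonneg q']
    calc ‖vm q'‖ ≤ max 1 ((2*‖q'‖*p/a) ^ (p-1)⁻¹) := h1
      _ ≤ R := max_le hR1 (le_trans h2 (le_max_right _ _))
  have hvq : ‖vm q‖ ≤ R := hbnd q (by linarith)
  -- the compact exclusion region
  set K : Set (ℝ × ℝ) := closedBall (0:ℝ×ℝ) R ∩ {w | ε ≤ ‖w - vm q‖} with hK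
  have hKc : IsCompact K :=
    (isCompact_closedBall (0:ℝ×ℝ) R).inter_right
      (isClosed_le continuous_const ((continuous_id.sub continuous_const).norm))
  obtain ⟨δ, hδ0, hδ1, hδkey⟩ :
      ∃ δ, 0 < δ ∧ δ ≤ 1 ∧ ∀ w ∈ K, stmt8_g p a b q w ≤ stmt8_g p a b q (vm q) - 5*R*δ := by
    rcases Set.eq_empty_or_nonempty K with hKe | hKe
    · exact ⟨1, one_pos, le_rfl, fun w hw => by rw [hKe] at hw; exact absurd hw (Set.notMem_empty w)⟩
    · obtain ⟨w0, hw0K, hw0max⟩ := hKc.exists_isMaxOn hKe (stmt8_g_cont hp a b q).continuousOn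
      have hlt : stmt8_g p a b q w0 < stmt8_g p a b q (vm q) := by
        rcases lt_or_eq_of_le (hvm q w0) with h | h
        · exact h
        · exfalso
          have hw0m : ∀ u, stmt8_g p a b q u ≤ stmt8_g p a b q w0 := by
            intro u; rw [h]; exact hvm q u
          have := stmt8_max_unique hp ha hb0 hb1 hw0m (hvm q)
          have hw0e := hw0K.2
          rw [this] at hw0e
          simp only [Set.mem_setOf_eq, sub_self, norm_zero] at hw0e
          linarith
      set η := stmt8_g p a b q (vm q) - stmt8_g p a b q w0 with hη
      have hη0 : 0 < η := by simp only [hη]; linarith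
      refine ⟨min 1 (η/(5*R)), lt_min one_pos (by positivity), min_le_left _ _, ?_⟩
      intro w hw
      have h5 : 5*R*(min 1 (η/(5*R))) ≤ η := by
        have h6 : min 1 (η/(5*R)) ≤ η/(5*R) := min_le_right _ _
        calc 5*R*(min 1 (η/(5*R))) ≤ 5*R*(η/(5*R)) := by nlinarith [hR0, h6]
          _ = η := by field_simp
      have := hw0max hw
      simp only [hη] at h5 ⊢
      have hle : stmt8_g p a b q w ≤ stmt8_g p a b q w0 := this
      linarith
  -- conclude
  filter_upwards [Metric.ball_mem_nhds q hδ0] with q' hq'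
  rw [Metric.mem_ball, dist_eq_norm] at hq'
  by_contra hcon
  push_neg at hcon
  have hq'n : ‖q'‖ ≤ ‖q‖ + 1 := by
    have := norm_sub_norm_le q' q
    linarith [this, hq', hδ1]
  have hvK : vm q' ∈ K := by
    constructor
    · rw [Metric.mem_closedBall, dist_zero_right]
      exact hbnd q' hq'n
    · exact le_of_lt hcon
  -- quantitative contradiction
  have hsh1 : stmt8_g p a b q' (vm q) - stmt8_g p a b q (vm q)
      = (vm q).1*(q'.1-q.1) + (vm q).2*(q'.2-q.2) := stmt8_g_shift q q' (vm q)
  have hsh2 : stmt8_g p a b q' (vm q') - stmt8_g p a b q (vm q')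
      = (vm q').1*(q'.1-q.1) + (vm q').2*(q'.2-q.2) := stmt8_g_shift q q' (vm q')
  have hb1' : (vm q).1*(q'.1-q.1) + (vm q).2*(q'.2-q.2) ≥ -(2*R*δ) := by
    have := stmt8_inner_bound (vm q) (q - q')
    have heq : (vm q).1*((q-q').1) + (vm q).2*((q-q').2)
        = -((vm q).1*(q'.1-q.1) + (vm q).2*(q'.2-q.2)) := by
      simp only [Prod.fst_sub, Prod.snd_sub]; ring
    rw [heq] at this
    have hn : ‖q - q'‖ = ‖q' - q‖ := norm_sub_rev q q'
    have h2 : 2*‖vm q‖*‖q-q'‖ ≤ 2*R*δ := by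
      rw [hn]
      have := norm_nonneg (q' - q)
      nlinarith [hvq, hq', norm_nonneg (vm q)]
    linarith
  have hb2' : (vm q').1*(q'.1-q.1) + (vm q').2*(q'.2-q.2) ≤ 2*R*δ := by
    have := stmt8_inner_bound (vm q') (q' - q)
    have heq : (vm q').1*((q'-q).1) + (vm q').2*((q'-q).2)
        = (vm q').1*(q'.1-q.1) + (vm q').2*(q'.2-q.2) := by
      simp only [Prod.fst_sub, Prod.snd_sub]
    rw [heq] at this
    have h2 : 2*‖vm q'‖*‖q'-q‖ ≤ 2*R*δ := by
      have := norm_nonneg (q' - q)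
      nlinarith [hvK.1, hq', norm_nonneg (vm q'), hbnd q' hq'n]
    linarith
  have hmax1 : stmt8_g p a b q' (vm q) ≤ stmt8_g p a b q' (vm q') := hvm q' (vm q)
  have hexcl : stmt8_g p a b q (vm q') ≤ stmt8_g p a b q (vm q) - 5*R*δ := hδkey _ hvK
  nlinarith [hsh1, hsh2, hb1', hb2', hmax1, hexcl, hR0, hδ0]

end part5


section part6
variable {p a b : ℝ}

/-- From the sup formula, `h q` equals the value at the maximizer. -/
lemma stmt8_h_eq {h : ℝ × ℝ → ℝ} (hh0 : ∀ q, h q = ⨆ st : ℝ × ℝ, stmt8_g p a b q st)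
    (vm : ℝ × ℝ → ℝ × ℝ) (hvm : ∀ q u, stmt8_g p a b q u ≤ stmt8_g p a b q (vm q))
    (q : ℝ × ℝ) : h q = stmt8_g p a b q (vm q) := by
  rw [hh0 q]
  apply le_antisymm
  · exact ciSup_le (hvm q)
  · exact le_ciSup ⟨stmt8_g p a b q (vm q), by rintro x ⟨u, rfl⟩; exact hvm q u⟩ (vm q)

/-- Differentiability of h with derivative given by the maximizer. -/
lemma stmt8_hasFDerivAt (hp : 2 < p) (ha : 0 < a) (hb0 : 0 ≤ b) (hb1 : b ≤ p - 1)
    {h : ℝ × ℝ → ℝ} (hh0 : ∀ q, h q = ⨆ st : ℝ × ℝ, stmt8_g p a b q st)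
    (vm : ℝ × ℝ → ℝ × ℝ) (hvm : ∀ q u, stmt8_g p a b q u ≤ stmt8_g p a b q (vm q))
    (q : ℝ × ℝ) :
    HasFDerivAt h ((vm q).1 • ContinuousLinearMap.fst ℝ ℝ ℝ
      + (vm q).2 • ContinuousLinearMap.snd ℝ ℝ ℝ) q := by
  have hEq := stmt8_h_eq hh0 vm hvm
  rw [hasFDerivAt_iff_isLittleO_nhds_zero]
  rw [Asymptotics.isLittleO_iff]
  intro c hc
  have hcont := stmt8_vmax_cont hp ha hb0 hb1 vm hvm q (half_pos hc)
  have hmap : Tendsto (fun u : ℝ × ℝ => q + u) (nhds 0) (nhds q) := by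
    have hcontqu : Continuous (fun u : ℝ × ℝ => q + u) := continuous_const.add continuous_id
    have := hcontqu.tendsto (0 : ℝ × ℝ)
    simpa using this
  filter_upwards [hmap.eventually hcont] with u hu
  have hLu : ((vm q).1 • ContinuousLinearMap.fst ℝ ℝ ℝ
      + (vm q).2 • ContinuousLinearMap.snd ℝ ℝ ℝ) u = (vm q).1 * u.1 + (vm q).2 * u.2 := by
    simp [ContinuousLinearMap.add_apply, ContinuousLinearMap.smul_apply, smul_eq_mul]
  -- lower bound
  have hlow : h q + ((vm q).1*u.1 + (vm q).2*u.2) ≤ h (q+u) := by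
    have h1 := stmt8_g_shift (p := p) (a := a) (b := b) q (q+u) (vm q)
    simp only [Prod.fst_add, Prod.snd_add, add_sub_cancel_left] at h1
    have h2 : stmt8_g p a b (q+u) (vm q) ≤ h (q+u) := by
      rw [hEq (q+u)]; exact hvm (q+u) (vm q)
    rw [hEq q]
    linarith
  -- upper bound
  have hup : h (q+u) ≤ h q + ((vm (q+u)).1*u.1 + (vm (q+u)).2*u.2) := by
    have h1 := stmt8_g_shift (p := p) (a := a) (b := b) q (q+u) (vm (q+u))
    simp only [Prod.fst_add, Prod.snd_add, add_sub_cancel_left] at h1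
    have h2 : stmt8_g p a b q (vm (q+u)) ≤ h q := by
      rw [hEq q]; exact hvm q (vm (q+u))
    rw [hEq (q+u)]
    linarith
  have hdiff : ((vm (q+u)).1*u.1 + (vm (q+u)).2*u.2) - ((vm q).1*u.1 + (vm q).2*u.2)
      = (vm (q+u) - vm q).1 * u.1 + (vm (q+u) - vm q).2 * u.2 := by
    simp only [Prod.fst_sub, Prod.snd_sub]; ring
  have hibnd := stmt8_inner_bound (vm (q+u) - vm q) u
  have hfin : (vm (q+u) - vm q).1 * u.1 + (vm (q+u) - vm q).2 * u.2 ≤ c * ‖u‖ := by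
    calc (vm (q+u) - vm q).1 * u.1 + (vm (q+u) - vm q).2 * u.2
        ≤ 2*‖vm (q+u) - vm q‖*‖u‖ := hibnd
      _ ≤ 2*(c/2)*‖u‖ := by nlinarith [norm_nonneg u, hu, norm_nonneg (vm (q+u) - vm q)]
      _ = c * ‖u‖ := by ring
  rw [hLu, Real.norm_eq_abs]
  rw [abs_le]
  constructor
  · have : (0:ℝ) ≤ c * ‖u‖ := mul_nonneg hc.le (norm_nonneg u)
    linarith
  · linarith

/-- Scaling of F. -/
lemma stmt8_F_scale (hp : 2 < p) {l : ℝ} (hl : 0 < l) (v : ℝ × ℝ) :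
    stmt8_F p a b (l*v.1, l*v.2) = l^p * stmt8_F p a b v := by
  have habs1 : |l*v.1| = l * |v.1| := by rw [abs_mul, abs_of_pos hl]
  have habs2 : |l*v.2| = l * |v.2| := by rw [abs_mul, abs_of_pos hl]
  have hmul1 : (l*|v.1|)^p = l^p * |v.1|^p := Real.mul_rpow hl.le (abs_nonneg _)
  have hmul2 : (l*|v.2|)^p = l^p * |v.2|^p := Real.mul_rpow hl.le (abs_nonneg _)
  have hmul3 : (l*|v.1|)^(p/2) = l^(p/2) * |v.1|^(p/2) := Real.mul_rpow hl.le (abs_nonneg _)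
  have hmul4 : (l*|v.2|)^(p/2) = l^(p/2) * |v.2|^(p/2) := Real.mul_rpow hl.le (abs_nonneg _)
  have hhalf : l^(p/2) * l^(p/2) = l^p := by
    rw [← Real.rpow_add hl]; congr 1; ring
  simp only [stmt8_F, habs1, habs2, hmul1, hmul2, hmul3, hmul4]
  linear_combination (a/p) * 2 * b * |v.1|^(p/2) * |v.2|^(p/2) * hhalf

/-- One-sided homogeneity. -/
lemma stmt8_homog_ge (hp : 2 < p) (ha : 0 < a) (hb0 : 0 ≤ b)
    {h : ℝ × ℝ → ℝ} (hh0 : ∀ q, h q = ⨆ st : ℝ × ℝ, stmt8_g p a b q st)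
    (vm : ℝ × ℝ → ℝ × ℝ) (hvm : ∀ q u, stmt8_g p a b q u ≤ stmt8_g p a b q (vm q))
    (q : ℝ × ℝ) {c : ℝ} (hc : 0 < c) :
    c^(p/(p-1)) * h q ≤ h (c*q.1, c*q.2) := by
  have hEq := stmt8_h_eq hh0 vm hvm
  set l : ℝ := c^((p-1)⁻¹) with hldef
  have hl : 0 < l := Real.rpow_pos_of_pos hc _
  have hlc : l * c = c^(p/(p-1)) := by
    rw [hldef]
    calc c^((p-1)⁻¹) * c = c^((p-1)⁻¹) * c^(1:ℝ) := by rw [Real.rpow_one]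
      _ = c^((p-1)⁻¹ + 1) := (Real.rpow_add hc _ _).symm
      _ = c^(p/(p-1)) := by
          congr 1
          have hne : p - 1 ≠ 0 := by intro h'; nlinarith [h']
          field_simp
          ring
  have hlp : l^p = c^(p/(p-1)) := by
    rw [hldef, ← Real.rpow_mul hc.le]
    congr 1
    have hne : p - 1 ≠ 0 := by intro h'; nlinarith [h']
    field_simp
  have hgv : stmt8_g p a b (c*q.1, c*q.2) (l*(vm q).1, l*(vm q).2)
      = c^(p/(p-1)) * stmt8_g p a b q (vm q) := by
    simp only [stmt8_g]
    rw [stmt8_F_scale hp hl]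
    linear_combination ((vm q).1*q.1 + (vm q).2*q.2) * hlc - (stmt8_F p a b (vm q)) * hlp
  calc c^(p/(p-1)) * h q = stmt8_g p a b (c*q.1, c*q.2) (l*(vm q).1, l*(vm q).2) := by
        rw [hEq q, hgv]
    _ ≤ stmt8_g p a b (c*q.1, c*q.2) (vm (c*q.1, c*q.2)) := hvm _ _
    _ = h (c*q.1, c*q.2) := (hEq _).symm

lemma stmt8_homog (hp : 2 < p) (ha : 0 < a) (hb0 : 0 ≤ b)
    {h : ℝ × ℝ → ℝ} (hh0 : ∀ q, h q = ⨆ st : ℝ × ℝ, stmt8_g p a b q st)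
    (vm : ℝ × ℝ → ℝ × ℝ) (hvm : ∀ q u, stmt8_g p a b q u ≤ stmt8_g p a b q (vm q))
    (q : ℝ × ℝ) {c : ℝ} (hc : 0 < c) :
    h (c*q.1, c*q.2) = c^(p/(p-1)) * h q := by
  have h1 := stmt8_homog_ge hp ha hb0 hh0 vm hvm q hc
  have h2 := stmt8_homog_ge hp ha hb0 hh0 vm hvm (c*q.1, c*q.2) (inv_pos.2 hc)
  simp only at h2
  rw [show c⁻¹*(c*q.1) = q.1 from by field_simp, show c⁻¹*(c*q.2) = q.2 from by field_simp] at h2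
  rw [Real.inv_rpow hc.le] at h2
  have hcp : (0:ℝ) < c^(p/(p-1)) := Real.rpow_pos_of_pos hc _
  have h3 := mul_le_mul_of_nonneg_left h2 hcp.le
  rw [← mul_assoc, mul_inv_cancel₀ (ne_of_gt hcp), one_mul] at h3
  linarith

end part6

/-- Euler identity for the Legendre transform `h` of `f`:
`h(s̄,t̄) = (1/p') (∂_s̄ h(s̄,t̄) · s̄ + ∂_t̄ h(s̄,t̄) · t̄)`. -/
theorem stmt_8 (p p' a b : ℝ) (hp : 2 < p) (hp' : p' = p / (p - 1)) (ha : 0 < a)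
    (hb0 : 0 ≤ b) (hb1 : b ≤ p - 1)
    (h : ℝ × ℝ → ℝ)
    (hh : ∀ q : ℝ × ℝ, h q = ⨆ st : ℝ × ℝ,
      (st.1 * q.1 + st.2 * q.2 -
        (a / p) * (|st.1| ^ p + 2 * b * |st.1| ^ (p / 2) * |st.2| ^ (p / 2) + |st.2| ^ p)))
    (sb tb : ℝ) :
    h (sb, tb) =
      (1 / p') * (fderiv ℝ h (sb, tb) (1, 0) * sb + fderiv ℝ h (sb, tb) (0, 1) * tb) := by
  have hh0 : ∀ q : ℝ × ℝ, h q = ⨆ st : ℝ × ℝ, stmt8_g p a b q st := hh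
  obtain ⟨vm, hvm⟩ : ∃ vm : ℝ × ℝ → ℝ × ℝ,
      ∀ q u, stmt8_g p a b q u ≤ stmt8_g p a b q (vm q) := by
    choose vm hvm using fun q => stmt8_exists_max (a := a) (b := b) hp ha hb0 q
    exact ⟨vm, hvm⟩
  set q : ℝ × ℝ := (sb, tb) with hq
  set L : (ℝ × ℝ) →L[ℝ] ℝ := (vm q).1 • ContinuousLinearMap.fst ℝ ℝ ℝ
      + (vm q).2 • ContinuousLinearMap.snd ℝ ℝ ℝ with hL
  have hfd : HasFDerivAt h L q := stmt8_hasFDerivAt hp ha hb0 hb1 hh0 vm hvm q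
  have hfderiv : fderiv ℝ h q = L := hfd.fderiv
  have hL10 : L (1, 0) = (vm q).1 := by
    simp [hL, ContinuousLinearMap.add_apply, ContinuousLinearMap.smul_apply, smul_eq_mul]
  have hL01 : L (0, 1) = (vm q).2 := by
    simp [hL, ContinuousLinearMap.add_apply, ContinuousLinearMap.smul_apply, smul_eq_mul]
  have hLq : L (sb, tb) = (vm q).1 * sb + (vm q).2 * tb := by
    simp [hL, ContinuousLinearMap.add_apply, ContinuousLinearMap.smul_apply, smul_eq_mul]
  -- derivative of c ↦ h (c*sb, c*tb) at 1, two ways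
  have hγ : HasDerivAt (fun c : ℝ => (c*sb, c*tb)) (sb, tb) 1 := by
    have h1 : HasDerivAt (fun c : ℝ => c*sb) sb 1 := by
      simpa using (hasDerivAt_id (1:ℝ)).mul_const sb
    have h2 : HasDerivAt (fun c : ℝ => c*tb) tb 1 := by
      simpa using (hasDerivAt_id (1:ℝ)).mul_const tb
    exact h1.prodMk h2
  have hfd' : HasFDerivAt h L ((fun c : ℝ => (c*sb, c*tb)) 1) := by
    simp only [one_mul]
    exact hfd
  have hd1 : HasDerivAt (fun c : ℝ => h (c*sb, c*tb)) (L (sb, tb)) 1 := by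
    have := hfd'.comp_hasDerivAt 1 hγ
    simpa [Function.comp_def] using this
  have hd2 : HasDerivAt (fun c : ℝ => c^(p/(p-1)) * h q) ((p/(p-1)) * h q) 1 := by
    have := (Real.hasDerivAt_rpow_const (x := (1:ℝ)) (p := p/(p-1))
      (Or.inl one_ne_zero)).mul_const (h q)
    simpa using this
  have heq : (fun c : ℝ => h (c*sb, c*tb)) =ᶠ[nhds 1] fun c : ℝ => c^(p/(p-1)) * h q := by
    filter_upwards [isOpen_Ioi.mem_nhds (show (0:ℝ) < 1 by norm_num)] with c hc
    exact stmt8_homog hp ha hb0 hh0 vm hvm q hc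
  have hd2' : HasDerivAt (fun c : ℝ => h (c*sb, c*tb)) ((p/(p-1)) * h q) 1 :=
    hd2.congr_of_eventuallyEq heq
  have hkey : L (sb, tb) = (p/(p-1)) * h q := hd1.unique hd2'
  rw [hLq] at hkey
  have hpp' : p/(p-1) ≠ 0 := ne_of_gt (div_pos (by linarith) (by linarith))
  rw [hfderiv, hL10, hL01, hkey, hp', one_div, inv_mul_cancel_left₀ hpp']
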